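/- Let m ≥ 1, ω = exp(2πi/(m+1)), and f : {0,...,m} → ℂ. Define the 2^m × 2^m diagonal matrix M = ∑_{b ∈ {0,1}^m} f(|b|) |b⟩⟨b|, where |b| is the Hamming weight. Then M = ∑_{j=0}^{m} c_j · (diag(1, ω^{−j}))^{⊗m}, where c_j = (1/(m+1)) ∑_{i=0}^{m} ω^{ij} f(i). -/
import Mathlib

open Complex Finset in
lemma key_sum (m : ℕ) (ω : ℂ) (hprim : IsPrimitiveRoot ω (m+1)) (i w : ℕ)
    (hi : i ≤ m) (hw : w ≤ m) :
    ∑ j ∈ Finset.range (m+1), (ω ^ i * (ω⁻¹) ^ w) ^ j = if i = w then ((m:ℂ)+1) else 0 := by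
  have hω0 : ω ≠ 0 := hprim.ne_zero (Nat.succ_ne_zero m)
  have hz : ω ^ i * (ω⁻¹) ^ w = ω ^ ((i:ℤ) - w) := by
    rw [zpow_sub₀ hω0]
    simp [zpow_natCast, div_eq_mul_inv, inv_pow]
  by_cases h : i = w
  · subst h
    have : ω ^ i * ω⁻¹ ^ i = 1 := by
      rw [inv_pow]; exact mul_inv_cancel₀ (pow_ne_zero _ hω0)
    rw [this]; simp
  · rw [if_neg h, hz]
    have hne : ω ^ ((i:ℤ) - w) ≠ 1 := by
      intro h1
      have hd := (hprim.zpow_eq_one_iff_dvd ((i:ℤ) - w)).mp h1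
      rcases hd with ⟨k, hk⟩
      have hk' : (i:ℤ) - w = ((m:ℤ)+1) * k := by push_cast at hk; linarith
      rcases lt_trichotomy k 0 with hk0 | hk0 | hk0
      · have h2 : ((m:ℤ)+1) * k ≤ -((m:ℤ)+1) := by nlinarith
        omega
      · subst hk0; simp at hk'; omega
      · have h2 : ((m:ℤ)+1) ≤ ((m:ℤ)+1) * k := by nlinarith
        omega
    have hpow : (ω ^ ((i:ℤ) - w)) ^ (m+1) = 1 := by
      rw [← zpow_natCast, ← zpow_mul, mul_comm, zpow_mul, zpow_natCast, hprim.pow_eq_one]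
      simp
    have := geom_sum_eq hne (m+1)
    rw [this, hpow]
    simp

open Complex in
theorem stmt_11 (m : ℕ) (hm : 1 ≤ m) (f : ℕ → ℂ)
    (ω : ℂ) (hω : ω = Complex.exp (2 * Real.pi * Complex.I / (m + 1)))
    (c : ℕ → ℂ) (hc : ∀ j, c j = (1 / (m + 1)) * ∑ i ∈ Finset.range (m + 1), ω ^ (i * j) * f i) :
    Matrix.diagonal (fun b : Fin m → Fin 2 => f (∑ i, (b i).val)) =
      ∑ j ∈ Finset.range (m + 1),
        c j • Matrix.diagonal (fun b : Fin m → Fin 2 => ∏ i, ((ω ^ j)⁻¹) ^ (b i).val) := by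
  have hm1 : ((m : ℂ) + 1) ≠ 0 := by
    exact_mod_cast (Nat.cast_add_one_ne_zero (R := ℂ) m)
  have hprim : IsPrimitiveRoot ω (m + 1) := by
    rw [hω]
    have h := Complex.isPrimitiveRoot_exp (m + 1) (Nat.succ_ne_zero m)
    convert h using 3
    push_cast; ring
  ext b b'
  simp only [Matrix.diagonal_apply, Matrix.sum_apply, Matrix.smul_apply, smul_eq_mul]
  by_cases hb : b = b'
  · subst hb
    simp only [if_pos rfl]
    set w := ∑ i, (b i).val with hwdef
    have hwle : w ≤ m := by
      calc w ≤ ∑ _i : Fin m, 1 := Finset.sum_le_sum fun i _ => Fin.is_le (b i)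
        _ = m := by simp
    have hrw : ∀ j, (∏ i, ((ω ^ j)⁻¹) ^ (b i).val) = (ω⁻¹ ^ w) ^ j := by
      intro j
      rw [Finset.prod_pow_eq_pow_sum, ← hwdef, ← inv_pow, ← pow_mul, mul_comm, pow_mul]
    calc f w
        = (1 / ((m:ℂ) + 1)) * ∑ i ∈ Finset.range (m + 1), f i *
            (if i = w then ((m:ℂ) + 1) else 0) := by
          simp only [mul_ite, mul_zero]
          rw [Finset.sum_ite_eq' (Finset.range (m+1)) w (fun i => f i * ((m:ℂ)+1))]
          rw [if_pos (Finset.mem_range.mpr (by omega))]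
          field_simp
      _ = (1 / ((m:ℂ) + 1)) * ∑ i ∈ Finset.range (m + 1), f i *
            ∑ j ∈ Finset.range (m + 1), (ω ^ i * ω⁻¹ ^ w) ^ j := by
          congr 1
          refine Finset.sum_congr rfl fun i hi => ?_
          rw [key_sum m ω hprim i w (by simpa using Nat.lt_succ_iff.mp (Finset.mem_range.mp hi)) hwle]
      _ = ∑ j ∈ Finset.range (m + 1), c j * (ω⁻¹ ^ w) ^ j := by
          simp only [hc, Finset.mul_sum, Finset.sum_mul]
          rw [Finset.sum_comm]
          refine Finset.sum_congr rfl fun j _ => Finset.sum_congr rfl fun i _ => ?_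
          ring
      _ = ∑ j ∈ Finset.range (m + 1), c j * ∏ i, ((ω ^ j)⁻¹) ^ (b i).val := by
          refine Finset.sum_congr rfl fun j _ => ?_
          rw [hrw j]
  · simp [if_neg hb]
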